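/- Fix ε > 0, σ > 0 and α with 0 < α < 1, and let V(x) = x²(1 + α cos(2πx/ε)) for x ∈ ℝ. For r > 0 define B₊(r) = (∫_r^∞ e^{-V(x)/σ} dx)^{1/2} · (∫_0^r e^{V(x)/σ} dx)^{1/2}. Then sup_{r > 0} B₊(r) = +∞; in fact B₊(ε(2πn + π/2)) → ∞ as n → ∞ through the integers. -/

import Mathlib

open MeasureTheory Filter Real

private lemma aux_cos_le (ε : ℝ) (hε : 0 < ε) (k : ℤ) {x : ℝ}
    (hx : |x - ε * (k + 1/2)| ≤ ε/8) :
    Real.cos (2 * π * x / ε) ≤ -(Real.sqrt 2 / 2) := by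
  set t : ℝ := 2 * π * (x - ε * (k + 1/2)) / ε with ht
  have hteq : 2 * π * x / ε = t + π + k * (2 * π) := by
    rw [ht]; field_simp
    ring
  have habs : |t| ≤ π / 4 := by
    rw [ht, abs_div, abs_of_pos hε, abs_mul, abs_of_pos (by positivity : (0:ℝ) < 2*π)]
    rw [div_le_iff₀ hε]
    calc 2 * π * |x - ε * (k + 1/2)| ≤ 2 * π * (ε/8) := by
          have := pi_pos; nlinarith
      _ = π / 4 * ε := by ring
  have hcos : Real.sqrt 2 / 2 ≤ Real.cos t := by
    rw [← Real.cos_pi_div_four, ← Real.cos_abs t]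
    exact Real.cos_le_cos_of_nonneg_of_le_pi (abs_nonneg t)
      (by linarith [pi_pos]) habs
  rw [hteq, Real.cos_add_int_mul_two_pi, Real.cos_add_pi]
  linarith

private lemma aux_cos_ge (ε : ℝ) (hε : 0 < ε) (m : ℤ) {x : ℝ}
    (hx : |x - ε * m| ≤ ε/8) :
    Real.sqrt 2 / 2 ≤ Real.cos (2 * π * x / ε) := by
  set t : ℝ := 2 * π * (x - ε * m) / ε with ht
  have hteq : 2 * π * x / ε = t + m * (2 * π) := by
    rw [ht]; field_simp
    ring
  have habs : |t| ≤ π / 4 := by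
    rw [ht, abs_div, abs_of_pos hε, abs_mul, abs_of_pos (by positivity : (0:ℝ) < 2*π)]
    rw [div_le_iff₀ hε]
    calc 2 * π * |x - ε * m| ≤ 2 * π * (ε/8) := by
          have := pi_pos; nlinarith
      _ = π / 4 * ε := by ring
  rw [hteq, Real.cos_add_int_mul_two_pi]
  rw [← Real.cos_pi_div_four, ← Real.cos_abs t]
  exact Real.cos_le_cos_of_nonneg_of_le_pi (abs_nonneg t) (by linarith [pi_pos]) habs

private lemma aux_integrable (ε σ α : ℝ) (hσ : 0 < σ) (hα0 : 0 < α) (hα1 : α < 1) :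
    Integrable (fun x : ℝ => Real.exp (-(x ^ 2 * (1 + α * Real.cos (2 * π * x / ε))) / σ)) := by
  have hb : (0:ℝ) < (1 - α) / σ := div_pos (by linarith) hσ
  refine (integrable_exp_neg_mul_sq hb).mono ?_ ?_
  · apply Continuous.aestronglyMeasurable
    fun_prop
  · filter_upwards with x
    rw [Real.norm_eq_abs, Real.norm_eq_abs, Real.abs_exp, Real.abs_exp, Real.exp_le_exp]
    have hcos : -1 ≤ Real.cos (2 * π * x / ε) := Real.neg_one_le_cos _
    have hx2 : (0:ℝ) ≤ x ^ 2 := sq_nonneg x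
    rw [show -((1 - α) / σ) * x ^ 2 = -((1 - α) * x ^ 2) / σ by ring,
      div_le_div_iff_of_pos_right hσ]
    nlinarith [mul_nonneg (mul_nonneg hα0.le hx2) (by linarith : (0:ℝ) ≤ Real.cos (2 * π * x / ε) + 1)]


private lemma aux_tail (ε σ α : ℝ) (hε : 0 < ε) (hσ : 0 < σ) (hα0 : 0 < α) (hα1 : α < 1)
    (r : ℝ) (hr : 3 * ε ≤ r) :
    ε / 4 * Real.exp (-((1 - α * (Real.sqrt 2 / 2)) * (r + 2 * ε) ^ 2) / σ) ≤
      ∫ x in Set.Ioi r, Real.exp (-(x ^ 2 * (1 + α * Real.cos (2 * π * x / ε))) / σ) := by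
  have hs2 : Real.sqrt 2 ^ 2 = 2 := Real.sq_sqrt (by norm_num)
  have hs0 : 0 < Real.sqrt 2 := Real.sqrt_pos.mpr (by norm_num)
  have hs2' : Real.sqrt 2 < 2 := by nlinarith
  set k : ℤ := ⌈r / ε⌉ with hk
  have hk1 : r / ε ≤ (k : ℝ) := Int.le_ceil _
  have hk2 : (k : ℝ) < r / ε + 1 := Int.ceil_lt_add_one _
  have hek1 : r ≤ ε * k := by rw [div_le_iff₀ hε] at hk1; linarith
  have hek2 : ε * k < r + ε := by
    have := (mul_lt_mul_iff_right₀ hε).mpr hk2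
    calc ε * (k:ℝ) < ε * (r / ε + 1) := this
      _ = r + ε := by field_simp
  have hek3 : ε * ((k:ℝ) + 1/2) = ε * k + ε / 2 := by ring
  set a : ℝ := ε * (k + 1/2) - ε / 8 with ha
  set b : ℝ := ε * (k + 1/2) + ε / 8 with hb
  have hra : r < a := by rw [ha]; nlinarith
  have hrb : b ≤ r + 2 * ε := by rw [hb]; nlinarith
  have hInt : IntegrableOn
      (fun x : ℝ => Real.exp (-(x ^ 2 * (1 + α * Real.cos (2 * π * x / ε))) / σ))
      (Set.Ioi r) := (aux_integrable ε σ α hσ hα0 hα1).integrableOn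
  have hsub : Set.Icc a b ⊆ Set.Ioi r := fun x hx => lt_of_lt_of_le hra hx.1
  have step1 : (∫ x in Set.Icc a b, Real.exp (-(x ^ 2 * (1 + α * Real.cos (2 * π * x / ε))) / σ)) ≤
      ∫ x in Set.Ioi r, Real.exp (-(x ^ 2 * (1 + α * Real.cos (2 * π * x / ε))) / σ) := by
    apply setIntegral_mono_set hInt
    · filter_upwards with x using (Real.exp_pos _).le
    · exact hsub.eventuallyLE
  refine le_trans ?_ step1
  have hptwise : ∀ x ∈ Set.Icc a b,
      Real.exp (-((1 - α * (Real.sqrt 2 / 2)) * (r + 2 * ε) ^ 2) / σ) ≤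
        Real.exp (-(x ^ 2 * (1 + α * Real.cos (2 * π * x / ε))) / σ) := by
    intro x hx
    have hx1 := hx.1
    have hx2 := hx.2
    rw [ha] at hx1
    rw [hb] at hx2
    have hxd : |x - ε * (k + 1/2)| ≤ ε / 8 := by
      rw [abs_le]; constructor <;> linarith
    have hcos := aux_cos_le ε hε k hxd
    have hx0 : 0 < x := by linarith
    have hxub : x ≤ r + 2 * ε := by linarith
    rw [Real.exp_le_exp, div_le_div_iff_of_pos_right hσ, neg_le_neg_iff]
    have h1 : x ^ 2 * (1 + α * Real.cos (2 * π * x / ε)) ≤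
        x ^ 2 * (1 - α * (Real.sqrt 2 / 2)) := by
      apply mul_le_mul_of_nonneg_left _ (sq_nonneg x)
      nlinarith
    refine h1.trans ?_
    have h2 : x ^ 2 ≤ (r + 2 * ε) ^ 2 := by
      apply pow_le_pow_left₀ hx0.le hxub
    have h3 : α * Real.sqrt 2 < 1 * 2 := mul_lt_mul'' hα1 hs2' hα0.le hs0.le
    rw [mul_comm]
    exact mul_le_mul_of_nonneg_left h2 (by linarith)
  have hmeas : MeasurableSet (Set.Icc a b) := measurableSet_Icc
  have hba : b - a = ε / 4 := by rw [ha, hb]; ring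
  have hvol : (volume (Set.Icc a b)).toReal = ε / 4 := by
    rw [Real.volume_Icc, hba, ENNReal.toReal_ofReal (by positivity)]
  have := setIntegral_ge_of_const_le_real hmeas (by simp [Real.volume_Icc] : volume (Set.Icc a b) ≠ ⊤)
    hptwise (hInt.mono_set hsub)
  rw [measureReal_def, hvol] at this
  linarith [this]

private lemma aux_front (ε σ α : ℝ) (hε : 0 < ε) (hσ : 0 < σ) (hα0 : 0 < α) (hα1 : α < 1)
    (r : ℝ) (hr : 3 * ε ≤ r) :
    ε / 4 * Real.exp ((1 + α * (Real.sqrt 2 / 2)) * (r - 3 * ε) ^ 2 / σ) ≤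
      ∫ x in Set.Icc (0:ℝ) r, Real.exp (x ^ 2 * (1 + α * Real.cos (2 * π * x / ε)) / σ) := by
  have hs2 : Real.sqrt 2 ^ 2 = 2 := Real.sq_sqrt (by norm_num)
  have hs0 : 0 < Real.sqrt 2 := Real.sqrt_pos.mpr (by norm_num)
  have hs2' : Real.sqrt 2 < 2 := by nlinarith
  set m : ℤ := ⌊r / ε⌋ - 1 with hm
  have hm1 : (m : ℝ) ≤ r / ε - 1 := by
    have := Int.floor_le (r / ε); push_cast [hm]; linarith
  have hm2 : r / ε - 2 < (m : ℝ) := by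
    have := Int.sub_one_lt_floor (r / ε); push_cast [hm]; linarith
  have hem1 : ε * m ≤ r - ε := by
    have := (mul_le_mul_iff_right₀ hε).mpr hm1
    calc ε * (m:ℝ) ≤ ε * (r / ε - 1) := this
      _ = r - ε := by field_simp
  have hem2 : r - 2 * ε < ε * m := by
    have := (mul_lt_mul_iff_right₀ hε).mpr hm2
    calc r - 2 * ε = ε * (r / ε - 2) := by field_simp

      _ < ε * m := this
  set a : ℝ := ε * m - ε / 8 with ha
  set b : ℝ := ε * m + ε / 8 with hb
  have hInt : IntegrableOn
      (fun x : ℝ => Real.exp (x ^ 2 * (1 + α * Real.cos (2 * π * x / ε)) / σ))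
      (Set.Icc (0:ℝ) r) := by
    apply Continuous.integrableOn_Icc
    fun_prop
  have hsub : Set.Icc a b ⊆ Set.Icc (0:ℝ) r := by
    intro x hx
    have hx1 := hx.1
    have hx2 := hx.2
    rw [ha] at hx1
    rw [hb] at hx2
    exact ⟨by linarith, by linarith⟩
  have step1 : (∫ x in Set.Icc a b, Real.exp (x ^ 2 * (1 + α * Real.cos (2 * π * x / ε)) / σ)) ≤
      ∫ x in Set.Icc (0:ℝ) r, Real.exp (x ^ 2 * (1 + α * Real.cos (2 * π * x / ε)) / σ) := by
    apply setIntegral_mono_set hInt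
    · filter_upwards with x using (Real.exp_pos _).le
    · exact hsub.eventuallyLE
  refine le_trans ?_ step1
  have hptwise : ∀ x ∈ Set.Icc a b,
      Real.exp ((1 + α * (Real.sqrt 2 / 2)) * (r - 3 * ε) ^ 2 / σ) ≤
        Real.exp (x ^ 2 * (1 + α * Real.cos (2 * π * x / ε)) / σ) := by
    intro x hx
    have hx1 := hx.1
    have hx2 := hx.2
    rw [ha] at hx1
    rw [hb] at hx2
    have hxd : |x - ε * m| ≤ ε / 8 := by
      rw [abs_le]; constructor <;> linarith
    have hcos := aux_cos_ge ε hε m hxd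
    have hxlb : r - 3 * ε ≤ x := by linarith
    have hx0 : 0 ≤ r - 3 * ε := by linarith
    rw [Real.exp_le_exp, div_le_div_iff_of_pos_right hσ]
    have h1 : (1 + α * (Real.sqrt 2 / 2)) * (r - 3 * ε) ^ 2 ≤
        (1 + α * (Real.sqrt 2 / 2)) * x ^ 2 := by
      apply mul_le_mul_of_nonneg_left _ (by nlinarith : (0:ℝ) ≤ 1 + α * (Real.sqrt 2 / 2))
      nlinarith
    refine h1.trans ?_
    rw [mul_comm]
    apply mul_le_mul_of_nonneg_left _ (sq_nonneg x)
    nlinarith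
  have hmeas : MeasurableSet (Set.Icc a b) := measurableSet_Icc
  have hba : b - a = ε / 4 := by rw [ha, hb]; ring
  have hvol : (volume (Set.Icc a b)).toReal = ε / 4 := by
    rw [Real.volume_Icc, hba, ENNReal.toReal_ofReal (by positivity)]
  have := setIntegral_ge_of_const_le_real hmeas (by simp [Real.volume_Icc] : volume (Set.Icc a b) ≠ ⊤)
    hptwise (hInt.mono_set hsub)
  rw [measureReal_def, hvol] at this
  linarith [this]

theorem stmt10 (ε σ α : ℝ) (hε : 0 < ε) (hσ : 0 < σ) (hα0 : 0 < α) (hα1 : α < 1)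
    (V : ℝ → ℝ) (hV : ∀ x, V x = x ^ 2 * (1 + α * Real.cos (2 * π * x / ε)))
    (B : ℝ → ℝ)
    (hB : ∀ r, B r = Real.sqrt (∫ x in Set.Ioi r, Real.exp (-V x / σ)) *
      Real.sqrt (∫ x in Set.Icc (0 : ℝ) r, Real.exp (V x / σ))) :
    ¬ BddAbove (B '' Set.Ioi (0 : ℝ)) ∧
    Tendsto (fun n : ℕ => B (ε * (2 * π * n + π / 2))) atTop atTop := by
  set β : ℝ := α * (Real.sqrt 2 / 2) with hβdef
  have hs2 : Real.sqrt 2 ^ 2 = 2 := Real.sq_sqrt (by norm_num)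
  have hs0 : 0 < Real.sqrt 2 := Real.sqrt_pos.mpr (by norm_num)
  have hβ0 : 0 < β := by positivity
  set φ : ℝ → ℝ := fun r => Real.sqrt (ε/4) * Real.exp (-((1 - β) * (r + 2*ε)^2) / σ / 2) *
      (Real.sqrt (ε/4) * Real.exp ((1 + β) * (r - 3*ε)^2 / σ / 2)) with hφdef
  have key : ∀ r : ℝ, 3 * ε ≤ r → φ r ≤ B r := by
    intro r hr
    have hT := aux_tail ε σ α hε hσ hα0 hα1 r hr
    have hF := aux_front ε σ α hε hσ hα0 hα1 r hr
    rw [hB r]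
    simp only [hV]
    simp only [hφdef]
    apply mul_le_mul
    · rw [Real.exp_half, ← Real.sqrt_mul (by positivity : (0:ℝ) ≤ ε/4)]
      exact Real.sqrt_le_sqrt hT
    · rw [Real.exp_half, ← Real.sqrt_mul (by positivity : (0:ℝ) ≤ ε/4)]
      exact Real.sqrt_le_sqrt hF
    · positivity
    · exact Real.sqrt_nonneg _
  have hφeq : ∀ r : ℝ, φ r =
      (ε/4) * Real.exp ((-((1 - β) * (r + 2*ε)^2) + (1 + β) * (r - 3*ε)^2) / σ / 2) := by
    intro r
    simp only [hφdef]
    rw [mul_mul_mul_comm, Real.mul_self_sqrt (by positivity), ← Real.exp_add]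
    congr 1
    ring
  have hpoly : Tendsto (fun r : ℝ => -((1 - β) * (r + 2*ε)^2) + (1 + β) * (r - 3*ε)^2)
      atTop atTop := by
    have heq : ∀ r : ℝ, -((1 - β) * (r + 2*ε)^2) + (1 + β) * (r - 3*ε)^2 =
        r * (2 * β * r + -((10 + 2*β) * ε)) + (5 + 13*β) * ε^2 := fun r => by ring
    rw [funext heq]
    apply tendsto_atTop_add_const_right
    exact tendsto_id.atTop_mul_atTop₀ (tendsto_atTop_add_const_right _ _
      (tendsto_id.const_mul_atTop (by positivity : (0:ℝ) < 2 * β)))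
  have hφten : Tendsto φ atTop atTop := by
    rw [funext hφeq]
    exact Tendsto.const_mul_atTop (by positivity)
      (Real.tendsto_exp_atTop.comp ((hpoly.atTop_div_const hσ).atTop_div_const two_pos))
  have hrn : Tendsto (fun n : ℕ => ε * (2 * π * n + π / 2)) atTop atTop := by
    apply Tendsto.const_mul_atTop hε
    apply tendsto_atTop_add_const_right
    exact tendsto_natCast_atTop_atTop.const_mul_atTop (by positivity : (0:ℝ) < 2 * π)
  have hBtend : Tendsto (fun n : ℕ => B (ε * (2 * π * n + π / 2))) atTop atTop := by
    apply tendsto_atTop_mono' atTop ?_ (hφten.comp hrn)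
    filter_upwards [hrn.eventually_ge_atTop (3 * ε)] with n hn
    exact key _ hn
  refine ⟨?_, hBtend⟩
  rintro ⟨M, hM⟩
  obtain ⟨n, hn⟩ := (tendsto_atTop.mp hBtend (M + 1)).exists
  have hmem : ε * (2 * π * (n:ℝ) + π / 2) ∈ Set.Ioi (0:ℝ) := by
    have := pi_pos
    have hn0 : (0:ℝ) ≤ (n:ℝ) := Nat.cast_nonneg n
    simp only [Set.mem_Ioi]
    have h2 : (0:ℝ) < 2 * π * n + π / 2 := by positivity
    exact mul_pos hε h2
  have := hM (Set.mem_image_of_mem B hmem)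
  linarith
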